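/- Let Ω ⊂ ℝ^N be bounded, ρ₁, ρ₂ ∈ X_Ω* with ρ₂ ≤ ρ₁ (i.e., ⟨ρ₂,v⟩ ≤ ⟨ρ₁,v⟩ for all v ≥ 0 in X_Ω), let φ₁, φ₂ : ∂Ω → ℝ be bounded, and let u₁ minimize I_{ρ₁} over C(φ₁,Ω) and u₂ minimize I_{ρ₂} over C(φ₂,Ω). Then u₂(x) ≤ u₁(x) + sup_{∂Ω}(φ₂ - φ₁) for all x ∈ Ω. -/

import Mathlib

open MeasureTheory Set Convolution Metric

lemma sqrt_avg_ge {F : Type*} [NormedAddCommGroup F] [InnerProductSpace ℝ F]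
    {a b : F} (ha : ‖a‖ ≤ 1) (hb : ‖b‖ ≤ 1) :
    ((Real.sqrt (1 - ‖a‖^2) + Real.sqrt (1 - ‖b‖^2))/2 ≤ Real.sqrt (1 - ‖(2⁻¹ : ℝ) • (a + b)‖^2)) ∧
    (Real.sqrt (1 - ‖(2⁻¹ : ℝ) • (a + b)‖^2) ≤ (Real.sqrt (1 - ‖a‖^2) + Real.sqrt (1 - ‖b‖^2))/2 → a = b) := by
  have ha2 : ‖a‖^2 ≤ 1 := by nlinarith [norm_nonneg a]
  have hb2 : ‖b‖^2 ≤ 1 := by nlinarith [norm_nonneg b]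
  have hpar := parallelogram_law_with_norm ℝ a b
  have hmid : ‖(2⁻¹ : ℝ) • (a + b)‖^2 = (‖a‖^2 + ‖b‖^2)/2 - ‖(2⁻¹ : ℝ) • (a - b)‖^2 := by
    rw [norm_smul, norm_smul]
    simp only [norm_inv, Real.norm_ofNat]
    nlinarith [hpar]
  set s := Real.sqrt (1 - ‖a‖^2) with hs_def
  set t := Real.sqrt (1 - ‖b‖^2) with ht_def
  have hs0 : 0 ≤ s := Real.sqrt_nonneg _
  have ht0 : 0 ≤ t := Real.sqrt_nonneg _
  have hs : s^2 = 1 - ‖a‖^2 := Real.sq_sqrt (by linarith)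
  have ht : t^2 = 1 - ‖b‖^2 := Real.sq_sqrt (by linarith)
  obtain ⟨q, hq0, hq⟩ : ∃ q : ℝ, 0 ≤ q ∧ ‖(2⁻¹ : ℝ) • (a - b)‖^2 = q := ⟨_, by positivity, rfl⟩
  obtain ⟨m, hm⟩ : ∃ m : ℝ, ‖(2⁻¹ : ℝ) • (a + b)‖^2 = m := ⟨_, rfl⟩
  rw [hq, hm] at hmid
  rw [hm]
  have key : ((s+t)/2)^2 + q ≤ 1 - m := by nlinarith [sq_nonneg (s - t)]
  constructor
  · have h1 : ((s+t)/2)^2 ≤ 1 - m := by linarith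
    calc (s+t)/2 = Real.sqrt (((s+t)/2)^2) := by rw [Real.sqrt_sq (by linarith)]
    _ ≤ _ := Real.sqrt_le_sqrt h1
  · intro heq
    have h3 : Real.sqrt (1 - m) ^ 2 = 1 - m := Real.sq_sqrt (by linarith)
    have h2 : 1 - m ≤ ((s+t)/2)^2 := by nlinarith [Real.sqrt_nonneg (1 - m)]
    have h5 : q ≤ 0 := by linarith
    have h6 : ‖(2⁻¹ : ℝ) • (a - b)‖^2 = 0 := le_antisymm (hq ▸ h5) (by positivity)
    have h4 : ‖(2⁻¹ : ℝ) • (a - b)‖ = 0 := by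
      exact pow_eq_zero_iff (two_ne_zero) |>.1 h6
    rw [norm_eq_zero, smul_eq_zero] at h4
    rcases h4 with h4 | h4
    · norm_num at h4
    · exact sub_eq_zero.1 h4

section helpers

variable {N : ℕ}

local notation "E" => EuclideanSpace ℝ (Fin N)

/-- Transfer of the strict convexity statement to the dual space. -/
lemma clm_avg_ge {A B : E →L[ℝ] ℝ} (hA : ‖A‖ ≤ 1) (hB : ‖B‖ ≤ 1) :
    ((Real.sqrt (1 - ‖A‖^2) + Real.sqrt (1 - ‖B‖^2))/2 ≤ Real.sqrt (1 - ‖(2⁻¹ : ℝ) • (A + B)‖^2)) ∧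
    (Real.sqrt (1 - ‖(2⁻¹ : ℝ) • (A + B)‖^2) ≤ (Real.sqrt (1 - ‖A‖^2) + Real.sqrt (1 - ‖B‖^2))/2 → A = B) := by
  set T := (InnerProductSpace.toDual ℝ E).symm
  have hTA : ‖T A‖ = ‖A‖ := T.norm_map A
  have hTB : ‖T B‖ = ‖B‖ := T.norm_map B
  have hTm : ‖T ((2⁻¹ : ℝ) • (A + B))‖ = ‖(2⁻¹ : ℝ) • (A + B)‖ := T.norm_map _
  have hmap : T ((2⁻¹ : ℝ) • (A + B)) = (2⁻¹ : ℝ) • (T A + T B) := by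
    simp [map_smulₛₗ, map_add]
  have := sqrt_avg_ge (a := T A) (b := T B) (by rw [hTA]; exact hA) (by rw [hTB]; exact hB)
  rw [← hmap, hTm, hTA, hTB] at this
  refine ⟨this.1, fun h => ?_⟩
  have := this.2 h
  exact T.injective this

lemma lipschitzOnWith_congr {α β : Type*} [PseudoEMetricSpace α] [PseudoEMetricSpace β]
    {K : NNReal} {f g : α → β} {s : Set α} (h : LipschitzOnWith K f s) (he : EqOn g f s) :
    LipschitzOnWith K g s := fun x hx y hy => by
  rw [he hx, he hy]; exact h hx hy

lemma lipOn_max {α : Type*} [PseudoMetricSpace α] {f g : α → ℝ} {s : Set α}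
    (hf : LipschitzOnWith 1 f s) (hg : LipschitzOnWith 1 g s) :
    LipschitzOnWith 1 (fun x => max (f x) (g x)) s := by
  rw [lipschitzOnWith_iff_dist_le_mul] at *
  intro x hx y hy
  have h1 := hf x hx y hy
  have h2 := hg x hx y hy
  have h3 := abs_max_sub_max_le_max (f x) (g x) (f y) (g y)
  simp only [Real.dist_eq, NNReal.coe_one, one_mul] at *
  exact le_trans h3 (max_le h1 h2)

lemma lipOn_min {α : Type*} [PseudoMetricSpace α] {f g : α → ℝ} {s : Set α}
    (hf : LipschitzOnWith 1 f s) (hg : LipschitzOnWith 1 g s) :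
    LipschitzOnWith 1 (fun x => min (f x) (g x)) s := by
  rw [lipschitzOnWith_iff_dist_le_mul] at *
  intro x hx y hy
  have h1 := hf x hx y hy
  have h2 := hg x hx y hy
  have h3 := abs_min_sub_min_le_max (f x) (g x) (f y) (g y)
  simp only [Real.dist_eq, NNReal.coe_one, one_mul] at *
  exact le_trans h3 (max_le h1 h2)

lemma lipOn_avg {α : Type*} [PseudoMetricSpace α] {f g : α → ℝ} {s : Set α}
    (hf : LipschitzOnWith 1 f s) (hg : LipschitzOnWith 1 g s) :
    LipschitzOnWith 1 (fun x => (f x + g x)/2) s := by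
  rw [lipschitzOnWith_iff_dist_le_mul] at *
  intro x hx y hy
  have h1 := hf x hx y hy
  have h2 := hg x hx y hy
  simp only [Real.dist_eq] at *
  have : (f x + g x)/2 - (f y + g y)/2 = ((f x - f y) + (g x - g y))/2 := by ring
  rw [this]
  calc |((f x - f y) + (g x - g y))/2| ≤ (|f x - f y| + |g x - g y|)/2 := by
        rw [abs_div]; simp only [abs_two]; apply div_le_div_of_nonneg_right ?_ ?_
        · exact abs_add_le _ _
        · norm_num
  _ ≤ _ := by simp only [NNReal.coe_one, one_mul] at *; linarith

/-- Integrability of the BI integrand. -/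
lemma integrableW {Ω : Set E} (hΩbdd : Bornology.IsBounded Ω) (u : E → ℝ) :
    IntegrableOn (fun x => 1 - Real.sqrt (1 - ‖fderiv ℝ u x‖ ^ 2)) Ω := by
  obtain ⟨R, hR⟩ := (Metric.isBounded_iff_subset_closedBall (0 : E)).1 hΩbdd
  have hfin : volume Ω < ⊤ :=
    lt_of_le_of_lt (measure_mono hR) measure_closedBall_lt_top
  haveI : IsFiniteMeasure (volume.restrict Ω) := by
    constructor
    rw [Measure.restrict_apply_univ]; exact hfin
  have hmeas : Measurable (fun x => 1 - Real.sqrt (1 - ‖fderiv ℝ u x‖ ^ 2)) := by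
    have h1 : Measurable (fun x : E => fderiv ℝ u x) := measurable_fderiv ℝ u
    exact (Real.continuous_sqrt.measurable.comp
      ((measurable_const.sub ((h1.norm.pow_const 2))))).const_sub 1
  refine ⟨hmeas.aestronglyMeasurable, ?_⟩
  apply HasFiniteIntegral.of_bounded (C := 1)
  filter_upwards with x
  have h0 : 0 ≤ Real.sqrt (1 - ‖fderiv ℝ u x‖ ^ 2) := Real.sqrt_nonneg _
  have h1 : Real.sqrt (1 - ‖fderiv ℝ u x‖ ^ 2) ≤ 1 := by
    calc Real.sqrt (1 - ‖fderiv ℝ u x‖ ^ 2) ≤ Real.sqrt 1 :=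
          Real.sqrt_le_sqrt (by nlinarith [norm_nonneg (fderiv ℝ u x)])
    _ = 1 := Real.sqrt_one
  rw [Real.norm_eq_abs, abs_le]
  constructor <;> linarith

end helpers

section constancy
variable {N : ℕ}
local notation "E" => EuclideanSpace ℝ (Fin N)

lemma eq_of_ae_fderiv_zero {K : NNReal} {f : E → ℝ} (hf : LipschitzWith K f)
    {U : Set E} (hU : IsOpen U) (hd : ∀ᵐ x, x ∈ U → fderiv ℝ f x = 0)
    {z : E} {r : ℝ} (hr : 0 < r) (hball : Metric.ball z (3*r) ⊆ U)
    {x : E} (hx : x ∈ Metric.ball z r) : f x = f z := by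
  suffices H : ∀ δ : ℝ, 0 < δ → δ < r → |f x - f z| ≤ 2 * K * δ by
    by_contra hne
    have habs : 0 < |f x - f z| := abs_pos.2 (sub_ne_zero.2 hne)
    set ε := |f x - f z| with hε
    have hδ0 : 0 < min (r/2) (ε/(2*K+1)) := by
      apply lt_min (by linarith)
      positivity
    have hδr : min (r/2) (ε/(2*K+1)) < r := lt_of_le_of_lt (min_le_left _ _) (by linarith)
    have h1 := H _ hδ0 hδr
    have h2 : 2 * K * min (r/2) (ε/(2*K+1)) ≤ 2 * K * (ε/(2*K+1)) := by
      apply mul_le_mul_of_nonneg_left (min_le_right _ _) (by positivity)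
    have hK0 : (0:ℝ) ≤ 2*K := by positivity
    have h3 : 2 * (K:ℝ) * (ε/(2*K+1)) < ε := by
      have : (2*(K:ℝ))/(2*K+1) < 1 := by
        rw [div_lt_one (by positivity)]; linarith
      calc 2*(K:ℝ) * (ε/(2*K+1)) = (2*(K:ℝ)/(2*K+1)) * ε := by ring
      _ < 1 * ε := by exact mul_lt_mul_of_pos_right this habs
      _ = ε := one_mul ε
    linarith
  intro δ hδ0 hδr
  -- bump function
  set φ : ContDiffBump (0:E) := ⟨δ/2, δ, by positivity, by linarith⟩ with hφdef
  set φn : E → ℝ := φ.normed volume with hφn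
  have hsupp : Function.support φn = ball (0:E) δ := φ.support_normed_eq
  have hφc : HasCompactSupport φn := φ.hasCompactSupport_normed
  have hφsm1 : ContDiff ℝ 1 φn := φ.contDiff_normed
  have hφcontfd : Continuous (fderiv ℝ φn) := hφsm1.continuous_fderiv one_ne_zero
  have hφdiff : Differentiable ℝ φn := hφsm1.differentiable one_ne_zero
  set L : ℝ →L[ℝ] ℝ →L[ℝ] ℝ := ContinuousLinearMap.lsmul ℝ ℝ with hL
  set F : E → ℝ := f ⋆[L, volume] φn with hF
  have hloc : LocallyIntegrable f volume := hf.continuous.locallyIntegrable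
  have hderiv : ∀ y, HasFDerivAt F ((f ⋆[L.precompR E, volume] fderiv ℝ φn) y) y :=
    fun y => hφc.hasFDerivAt_convolution_right L hloc hφsm1 y
  -- Lipschitz structure of the shifted bump
  obtain ⟨Kφ, hKφ⟩ := ContDiff.lipschitzWith_of_hasCompactSupport hφc hφsm1 one_ne_zero
  -- derivative of F vanishes on ball z (2r)
  have hD0 : ∀ y ∈ ball z (2*r), (f ⋆[L.precompR E, volume] fderiv ℝ φn) y = 0 := by
    intro y hy
    apply ContinuousLinearMap.ext
    intro v
    rw [ContinuousLinearMap.zero_apply]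
    rw [convolution_precompR_apply L hloc (hφc.fderiv ℝ) hφcontfd y v]
    set g : E → ℝ := fun t => φn (y - t) with hg
    have hgl : LipschitzWith Kφ g := by
      have hsubl : LipschitzWith 1 (fun t : E => y - t) :=
        LipschitzWith.of_dist_le_mul fun a b => by rw [dist_sub_left]; simp
      have := hKφ.comp hsubl; rw [mul_one] at this; exact this
    have hgc : HasCompactSupport g := hφc.comp_homeomorph (Homeomorph.subLeft y)
    have hline : ∀ t : E, lineDeriv ℝ g t (-v) = fderiv ℝ φn (y - t) v := by
      intro t
      have hfd : HasFDerivAt φn (fderiv ℝ φn (y - t)) (y - t) :=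
        (hφdiff (y - t)).hasFDerivAt
      have h2 : HasLineDerivAt ℝ φn (fderiv ℝ φn (y - t) v) (y - t) v :=
        hfd.hasLineDerivAt v
      have h3 : HasLineDerivAt ℝ g (fderiv ℝ φn (y - t) v) t (-v) := by
        unfold HasLineDerivAt at h2 ⊢
        have heq : (fun s : ℝ => g (t + s • (-v))) = (fun s : ℝ => φn ((y - t) + s • v)) := by
          funext s
          simp only [hg, smul_neg]
          congr 1
          abel
        rw [heq]
        exact h2
      exact h3.lineDeriv
    have hibp := hf.integral_lineDeriv_mul_eq hgl hgc v (μ := volume)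
    have hae : ∀ᵐ t : E, lineDeriv ℝ f t v * g t = 0 := by
      filter_upwards [hf.ae_differentiableAt (μ := volume), hd] with t h1 h2
      by_cases hgt : g t = 0
      · rw [hgt, mul_zero]
      · have hmem : y - t ∈ Function.support φn := by
          simp only [hg] at hgt; exact hgt
        rw [hsupp] at hmem
        have htU : t ∈ U := by
          apply hball
          rw [mem_ball]
          have h5 : dist t y < δ := by
            rw [mem_ball_zero_iff] at hmem
            rw [dist_comm, dist_eq_norm]
            simpa using hmem
          calc dist t z ≤ dist t y + dist y z := dist_triangle _ _ _
          _ < δ + 2*r := add_lt_add h5 (mem_ball.1 hy)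
          _ ≤ 3*r := by linarith
        rw [h1.lineDeriv_eq_fderiv, h2 htU]
        simp
    have hzero : ∫ t : E, lineDeriv ℝ f t v * g t = 0 := integral_eq_zero_of_ae hae
    rw [hzero] at hibp
    have : ∀ t : E, L (f t) (fderiv ℝ φn (y - t) v) = lineDeriv ℝ g t (-v) * f t := by
      intro t
      rw [hline t]
      simp [hL, ContinuousLinearMap.lsmul_apply, smul_eq_mul, mul_comm]
    rw [convolution_def]
    simp_rw [this]
    exact hibp.symm
  -- F is constant on ball z (2r)
  have hFconst : F x = F z := by
    have hconv : Convex ℝ (ball z (2*r)) := convex_ball _ _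
    have hz2 : z ∈ ball z (2*r) := mem_ball_self (by linarith)
    have hx2 : x ∈ ball z (2*r) := by
      rw [mem_ball] at hx ⊢; linarith
    have hle := hconv.norm_image_sub_le_of_norm_hasFDerivWithin_le
      (f' := fun y => (f ⋆[L.precompR E, volume] fderiv ℝ φn) y)
      (fun y hy => (hderiv y).hasFDerivWithinAt)
      (C := 0) (fun y hy => by
        show ‖(f ⋆[L.precompR E, volume] fderiv ℝ φn) y‖ ≤ 0
        rw [hD0 y hy, norm_zero]) hz2 hx2
    rw [zero_mul] at hle
    have := norm_sub_eq_zero_iff.1 (le_antisymm hle (norm_nonneg _))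
    exact this
  -- F approximates f
  have happrox : ∀ y : E, |F y - f y| ≤ K * δ := by
    intro y
    have hone : ∫ t : E, φn (y - t) = 1 := by
      rw [integral_sub_left_eq_self φn volume y]
      exact φ.integral_normed
    have hcont1 : Continuous fun t : E => f t * φn (y - t) :=
      hf.continuous.mul (φ.continuous_normed.comp (continuous_const.sub continuous_id))
    have hcs : HasCompactSupport fun t : E => φn (y - t) :=
      hφc.comp_homeomorph (Homeomorph.subLeft y)
    have hint1 : Integrable (fun t : E => f t * φn (y - t)) :=
      hcont1.integrable_of_hasCompactSupport (hcs.mul_left)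
    have hintφ : Integrable (fun t : E => φn (y - t)) :=
      (φ.continuous_normed.comp (continuous_const.sub continuous_id)).integrable_of_hasCompactSupport hcs
    have hint2 : Integrable (fun t : E => f y * φn (y - t)) := hintφ.const_mul _
    have hFy : F y = ∫ t : E, f t * φn (y - t) := by
      rw [hF, convolution_def]
      simp only [hL, ContinuousLinearMap.lsmul_apply, smul_eq_mul]
    have hdiff : F y - f y = ∫ t : E, (f t - f y) * φn (y - t) := by
      rw [hFy]
      have : f y = ∫ t : E, f y * φn (y - t) := by
        rw [integral_const_mul, hone, mul_one]
      conv_lhs => rw [this]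
      rw [← integral_sub hint1 hint2]
      congr 1; funext t; ring
    rw [hdiff]
    have hintsub : Integrable (fun t : E => (f t - f y) * φn (y - t)) := by
      have : (fun t : E => (f t - f y) * φn (y - t)) =
          (fun t : E => f t * φn (y - t)) - (fun t : E => f y * φn (y - t)) := by
        funext t; simp [sub_mul]
      rw [this]; exact hint1.sub hint2
    have habs_eq : (fun t : E => |(f t - f y) * φn (y - t)|) =
        (fun t : E => |f t - f y| * |φn (y - t)|) := by
      funext t; rw [abs_mul]
    calc |∫ t : E, (f t - f y) * φn (y - t)| ≤ ∫ t : E, |f t - f y| * |φn (y - t)| := by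
          simpa [Real.norm_eq_abs, abs_mul] using
            norm_integral_le_integral_norm (μ := volume) (fun t : E => (f t - f y) * φn (y - t))
    _ ≤ ∫ t : E, (K * δ) * φn (y - t) := by
        refine integral_mono ?_ (hintφ.const_mul _) ?_
        · rw [← habs_eq]; exact hintsub.abs
        · intro t
          have hφnn : (0:ℝ) ≤ φn (y - t) := φ.nonneg_normed _
          show |f t - f y| * |φn (y - t)| ≤ (K * δ) * φn (y - t)
          rw [abs_of_nonneg hφnn]
          by_cases hgt : φn (y - t) = 0
          · rw [hgt, mul_zero, mul_zero]
          · refine mul_le_mul_of_nonneg_right ?_ hφnn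
            have hmem : y - t ∈ Function.support φn := hgt
            rw [hsupp, mem_ball_zero_iff] at hmem
            have hd2 := hf.dist_le_mul t y
            rw [Real.dist_eq] at hd2
            refine le_trans hd2 ?_
            refine mul_le_mul_of_nonneg_left ?_ (K.coe_nonneg)
            rw [dist_comm, dist_eq_norm]
            simpa using hmem.le
    _ = K * δ := by rw [integral_const_mul, hone, mul_one]
  have e1 : |f x - F x| ≤ K * δ := by rw [abs_sub_comm]; exact happrox x
  have e2 : |F z - f z| ≤ K * δ := happrox z
  calc |f x - f z| = |(f x - F x) + (F z - f z)| := by rw [← hFconst]; ring_nf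
  _ ≤ |f x - F x| + |F z - f z| := abs_add_le _ _
  _ ≤ K * δ + K * δ := add_le_add e1 e2
  _ = 2 * K * δ := by ring

/-- The Born-Infeld energy on a bounded domain with source `ρ`. -/
noncomputable def BIenergy (N : ℕ) (Ω : Set (EuclideanSpace ℝ (Fin N)))
    (ρ : (EuclideanSpace ℝ (Fin N) → ℝ) →ₗ[ℝ] ℝ)
    (u : EuclideanSpace ℝ (Fin N) → ℝ) : ℝ :=
  (∫ x in Ω, (1 - Real.sqrt (1 - ‖fderiv ℝ u x‖ ^ 2))) - ρ u

/-- The admissible class `C(φ,Ω)`. -/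
def Admissible (N : ℕ) (Ω : Set (EuclideanSpace ℝ (Fin N)))
    (φ : EuclideanSpace ℝ (Fin N) → ℝ) (u : EuclideanSpace ℝ (Fin N) → ℝ) : Prop :=
  LipschitzOnWith 1 u (closure Ω) ∧ EqOn u φ (frontier Ω)

theorem BI_comparison (N : ℕ) (hN : 3 ≤ N)
    (Ω : Set (EuclideanSpace ℝ (Fin N))) (hΩopen : IsOpen Ω)
    (hΩconn : IsConnected Ω) (hΩbdd : Bornology.IsBounded Ω)
    (φ₁ φ₂ : EuclideanSpace ℝ (Fin N) → ℝ)
    (hφ₁ : ∃ M, ∀ x ∈ frontier Ω, |φ₁ x| ≤ M)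
    (hφ₂ : ∃ M, ∀ x ∈ frontier Ω, |φ₂ x| ≤ M)
    (ρ₁ ρ₂ : (EuclideanSpace ℝ (Fin N) → ℝ) →ₗ[ℝ] ℝ)
    (hρ : ∀ v : EuclideanSpace ℝ (Fin N) → ℝ, (∀ x ∈ closure Ω, 0 ≤ v x) → ρ₂ v ≤ ρ₁ v)
    (u₁ u₂ : EuclideanSpace ℝ (Fin N) → ℝ)
    (h₁ : Admissible N Ω φ₁ u₁) (h₂ : Admissible N Ω φ₂ u₂)
    (hmin₁ : ∀ v, Admissible N Ω φ₁ v → BIenergy N Ω ρ₁ u₁ ≤ BIenergy N Ω ρ₁ v)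
    (hmin₂ : ∀ v, Admissible N Ω φ₂ v → BIenergy N Ω ρ₂ u₂ ≤ BIenergy N Ω ρ₂ v) :
    ∀ x ∈ Ω, u₂ x ≤ u₁ x + sSup ((fun y => φ₂ y - φ₁ y) '' frontier Ω) := by
  intro x₀ hx₀
  haveI : Nonempty (Fin N) := ⟨⟨0, by omega⟩⟩
  set c := sSup ((fun y => φ₂ y - φ₁ y) '' frontier Ω) with hc_def
  have hΩne : Ω.Nonempty := hΩconn.nonempty
  have hΩsub : Ω ⊆ closure Ω := subset_closure
  have hfsub : frontier Ω ⊆ closure Ω := frontier_subset_closure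
  -- frontier is nonempty
  have hfront : (frontier Ω).Nonempty := by
    by_contra hfe
    rw [not_nonempty_iff_eq_empty] at hfe
    have hclosed : IsClosed Ω := by
      have hcl : closure Ω = Ω := by rw [closure_eq_self_union_frontier, hfe, union_empty]
      rw [← hcl]; exact isClosed_closure
    rcases isClopen_iff.1 ⟨hclosed, hΩopen⟩ with h | h
    · exact hΩne.ne_empty h
    · rw [h] at hΩbdd
      exact NormedSpace.unbounded_univ ℝ (EuclideanSpace ℝ (Fin N)) hΩbdd
  -- the sup is an upper bound
  obtain ⟨M₁, hM₁⟩ := hφ₁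
  obtain ⟨M₂, hM₂⟩ := hφ₂
  have hbdd : BddAbove ((fun y => φ₂ y - φ₁ y) '' frontier Ω) := by
    refine ⟨M₂ + M₁, fun w hw => ?_⟩
    obtain ⟨y, hy, rfl⟩ := hw
    have e1 := abs_le.1 (hM₁ y hy)
    have e2 := abs_le.1 (hM₂ y hy)
    simp only
    linarith [e1.1, e2.2]
  have hcb : ∀ y ∈ frontier Ω, φ₂ y - φ₁ y ≤ c := fun y hy => le_csSup hbdd ⟨y, hy, rfl⟩
  by_contra hcon
  push_neg at hcon
  set d := u₂ x₀ - u₁ x₀ - c with hd_def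
  have hd0 : 0 < d := by simp only [hd_def]; linarith
  obtain ⟨h₁lip, h₁bd⟩ := h₁
  obtain ⟨h₂lip, h₂bd⟩ := h₂
  -- extensions
  obtain ⟨w₁, hw₁lip, hw₁eq⟩ := h₁lip.extend_real
  obtain ⟨w₂, hw₂lip, hw₂eq⟩ := h₂lip.extend_real
  set h : EuclideanSpace ℝ (Fin N) → ℝ := fun x => w₂ x - w₁ x with hh_def
  have hhlip : LipschitzWith 2 h := by
    have := hw₂lip.sub hw₁lip
    norm_num at this
    exact this
  have hhcont : Continuous h := hhlip.continuous
  have hΩmeas : MeasurableSet Ω := hΩopen.measurableSet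
  set μΩ := volume.restrict Ω with hμΩ
  -- choose a good level ε
  have hcnt := Measure.countable_meas_level_set_pos₀ (μ := μΩ) (g := h)
    hhcont.measurable.nullMeasurable
  obtain ⟨ε, hεI, hεgood⟩ : ∃ ε, ε ∈ Ioo (0:ℝ) d ∧ ¬ 0 < μΩ {a | h a = c + ε} := by
    by_contra hb
    push_neg at hb
    have hsubc : Ioo (0:ℝ) d ⊆ (fun t => t - c) '' {t | 0 < μΩ {a | h a = t}} := by
      intro ε hε
      exact ⟨c + ε, hb ε hε, by ring⟩
    have hcnt2 : (Ioo (0:ℝ) d).Countable := (hcnt.image _).mono hsubc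
    rw [← Cardinal.le_aleph0_iff_set_countable, Cardinal.mk_Ioo_real hd0] at hcnt2
    exact hcnt2.not_gt Cardinal.aleph0_lt_continuum
  obtain ⟨hε0, hεd⟩ := hεI
  have hZ : μΩ {a | h a = c + ε} = 0 := le_antisymm (not_lt.1 hεgood) zero_le
  set c' := c + ε with hc'_def
  -- the bridge function g
  set g : EuclideanSpace ℝ (Fin N) → ℝ := fun x => max (h x - c') 0 with hg_def
  have hg0 : ∀ x, 0 ≤ g x := fun x => le_max_right _ _
  have hglip : LipschitzWith 2 g := by
    have l1 : LipschitzWith 2 (fun x => h x - c') := by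
      have := hhlip.sub (LipschitzWith.const c')
      norm_num at this
      exact this
    exact l1.max_const 0
  have hgcont : Continuous g := hglip.continuous
  -- h agrees with u₂ - u₁ on the closure
  have hhval : ∀ x ∈ closure Ω, h x = u₂ x - u₁ x := by
    intro x hx
    simp only [hh_def, ← hw₁eq hx, ← hw₂eq hx]
  -- g vanishes on the frontier
  have hgz : ∀ y ∈ frontier Ω, g y = 0 := by
    intro y hy
    have h1 : h y = u₂ y - u₁ y := hhval y (hfsub hy)
    have h2 : u₂ y - u₁ y = φ₂ y - φ₁ y := by rw [h₁bd hy, h₂bd hy]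
    have h3 : h y - c' ≤ -ε := by
      rw [h1, h2, hc'_def]
      have := hcb y hy
      linarith
    simp only [hg_def]
    exact max_eq_right (by linarith)
  -- competitors
  set v₁ : EuclideanSpace ℝ (Fin N) → ℝ := fun x => u₁ x + g x with hv₁_def
  set v₂ : EuclideanSpace ℝ (Fin N) → ℝ := fun x => u₂ x - g x with hv₂_def
  set m : EuclideanSpace ℝ (Fin N) → ℝ := fun x => u₂ x - g x / 2 with hm_def
  -- sub/add const Lipschitz-on helpers
  have l_sub : LipschitzOnWith 1 (fun x => u₂ x - c') (closure Ω) := by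
    intro a ha b hb
    show edist (u₂ a - c') (u₂ b - c') ≤ _
    rw [edist_sub_right]
    exact h₂lip ha hb
  have l_add : LipschitzOnWith 1 (fun x => u₁ x + c') (closure Ω) := by
    intro a ha b hb
    show edist (u₁ a + c') (u₁ b + c') ≤ _
    rw [edist_add_right]
    exact h₁lip ha hb
  -- v₁ admissible
  have hv₁lip : LipschitzOnWith 1 v₁ (closure Ω) := by
    refine lipschitzOnWith_congr (lipOn_max l_sub h₁lip) ?_
    intro x hx
    show v₁ x = max (u₂ x - c') (u₁ x)
    have hx1 : h x = u₂ x - u₁ x := hhval x hx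
    simp only [hv₁_def, hg_def, hx1]
    rcases le_total (u₂ x - c') (u₁ x) with hle | hle
    · rw [max_eq_right hle, max_eq_right (by linarith), add_zero]
    · rw [max_eq_left hle, max_eq_left (by linarith)]; ring
  have hv₁bd : EqOn v₁ φ₁ (frontier Ω) := by
    intro y hy
    show u₁ y + g y = φ₁ y
    rw [hgz y hy, add_zero, h₁bd hy]
  -- v₂ admissible
  have hv₂lip : LipschitzOnWith 1 v₂ (closure Ω) := by
    refine lipschitzOnWith_congr (lipOn_min l_add h₂lip) ?_
    intro x hx
    show v₂ x = min (u₁ x + c') (u₂ x)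
    have hx1 : h x = u₂ x - u₁ x := hhval x hx
    simp only [hv₂_def, hg_def, hx1]
    rcases le_total (u₁ x + c') (u₂ x) with hle | hle
    · rw [min_eq_left hle, max_eq_left (by linarith)]; ring
    · rw [min_eq_right hle, max_eq_right (by linarith)]; ring
  have hv₂bd : EqOn v₂ φ₂ (frontier Ω) := by
    intro y hy
    show u₂ y - g y = φ₂ y
    rw [hgz y hy, sub_zero, h₂bd hy]
  -- m admissible
  have hmlip : LipschitzOnWith 1 m (closure Ω) := by
    refine lipschitzOnWith_congr (lipOn_avg h₂lip hv₂lip) ?_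
    intro x _
    show m x = (u₂ x + v₂ x)/2
    simp only [hm_def, hv₂_def]
    ring
  have hmbd : EqOn m φ₂ (frontier Ω) := by
    intro y hy
    show u₂ y - g y / 2 = φ₂ y
    rw [hgz y hy]
    simp [h₂bd hy]
  -- energy bookkeeping
  set J : (EuclideanSpace ℝ (Fin N) → ℝ) → ℝ :=
    fun w => ∫ x in Ω, (1 - Real.sqrt (1 - ‖fderiv ℝ w x‖ ^ 2)) with hJ_def
  have hJint : ∀ w : EuclideanSpace ℝ (Fin N) → ℝ,
      IntegrableOn (fun x => 1 - Real.sqrt (1 - ‖fderiv ℝ w x‖ ^ 2)) Ω := fun w =>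
    integrableW hΩbdd w
  -- linear functional computations
  have hρ₁v₁ : ρ₁ v₁ = ρ₁ u₁ + ρ₁ g := by
    have : v₁ = u₁ + g := rfl
    rw [this, map_add]
  have hρ₂v₂ : ρ₂ v₂ = ρ₂ u₂ - ρ₂ g := by
    have : v₂ = u₂ - g := rfl
    rw [this, map_sub]
  have hρ₂m : ρ₂ m = ρ₂ u₂ - 2⁻¹ * ρ₂ g := by
    have hm2 : m = u₂ - (2⁻¹ : ℝ) • g := by
      funext x
      show u₂ x - g x / 2 = u₂ x - (2⁻¹ : ℝ) * g x
      ring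
    rw [hm2, map_sub, LinearMap.map_smul]
    simp [smul_eq_mul]
  -- minimality inequalities
  have hE1 := hmin₁ v₁ ⟨hv₁lip, hv₁bd⟩
  have hE2 := hmin₂ v₂ ⟨hv₂lip, hv₂bd⟩
  have hEm := hmin₂ m ⟨hmlip, hmbd⟩
  simp only [BIenergy] at hE1 hE2 hEm
  have hE1' : J u₁ - ρ₁ u₁ ≤ J v₁ - ρ₁ v₁ := hE1
  have hE2' : J u₂ - ρ₂ u₂ ≤ J v₂ - ρ₂ v₂ := hE2
  have hEm' : J u₂ - ρ₂ u₂ ≤ J m - ρ₂ m := hEm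
  clear hE1 hE2 hEm
  -- pointwise fderiv transfers
  have hnbhd : ∀ x ∈ Ω, closure Ω ∈ nhds x := fun x hx =>
    Filter.mem_of_superset (hΩopen.mem_nhds hx) hΩsub
  have hev : ∀ (f₁ f₂ : EuclideanSpace ℝ (Fin N) → ℝ), ∀ x ∈ Ω,
      EqOn f₁ f₂ (closure Ω) → f₁ =ᶠ[nhds x] f₂ := by
    intro f₁ f₂ x hx heq
    filter_upwards [hnbhd x hx] with y hy using heq hy
  have hfu₁ : ∀ x ∈ Ω, fderiv ℝ u₁ x = fderiv ℝ w₁ x := fun x hx =>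
    (hev u₁ w₁ x hx hw₁eq).fderiv_eq
  have hfu₂ : ∀ x ∈ Ω, fderiv ℝ u₂ x = fderiv ℝ w₂ x := fun x hx =>
    (hev u₂ w₂ x hx hw₂eq).fderiv_eq
  -- Claim A : pointwise integrand identity off the level set
  have hclaimA : ∀ x ∈ Ω, h x ≠ c' →
      (1 - Real.sqrt (1 - ‖fderiv ℝ v₁ x‖ ^ 2)) + (1 - Real.sqrt (1 - ‖fderiv ℝ v₂ x‖ ^ 2)) =
      (1 - Real.sqrt (1 - ‖fderiv ℝ u₁ x‖ ^ 2)) + (1 - Real.sqrt (1 - ‖fderiv ℝ u₂ x‖ ^ 2)) := by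
    intro x hx hne
    rcases lt_or_gt_of_ne hne with hlt | hgt
    · -- below the level: g ≡ 0 nearby
      have hO : IsOpen ({y | h y < c'} ∩ Ω) := (isOpen_lt hhcont continuous_const).inter hΩopen
      have hxO : x ∈ {y | h y < c'} ∩ Ω := ⟨hlt, hx⟩
      have he₁ : v₁ =ᶠ[nhds x] u₁ := by
        filter_upwards [hO.mem_nhds hxO] with y hy
        show u₁ y + g y = u₁ y
        have hylt : h y < c' := hy.1
        have : g y = 0 := max_eq_right (by linarith)
        rw [this, add_zero]
      have he₂ : v₂ =ᶠ[nhds x] u₂ := by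
        filter_upwards [hO.mem_nhds hxO] with y hy
        show u₂ y - g y = u₂ y
        have hylt : h y < c' := hy.1
        have : g y = 0 := max_eq_right (by linarith)
        rw [this, sub_zero]
      rw [he₁.fderiv_eq, he₂.fderiv_eq]
    · -- above the level
      have hO : IsOpen ({y | c' < h y} ∩ Ω) := (isOpen_lt continuous_const hhcont).inter hΩopen
      have hxO : x ∈ {y | c' < h y} ∩ Ω := ⟨hgt, hx⟩
      have he₁ : v₁ =ᶠ[nhds x] fun y => w₂ y - c' := by
        filter_upwards [hO.mem_nhds hxO] with y hy
        show u₁ y + g y = w₂ y - c'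
        have hygt : c' < h y := hy.1
        have hgy : g y = h y - c' := max_eq_left (by linarith)
        rw [hgy, hw₁eq (hΩsub hy.2)]
        simp only [hh_def]
        ring
      have he₂ : v₂ =ᶠ[nhds x] fun y => w₁ y + c' := by
        filter_upwards [hO.mem_nhds hxO] with y hy
        show u₂ y - g y = w₁ y + c'
        have hygt : c' < h y := hy.1
        have hgy : g y = h y - c' := max_eq_left (by linarith)
        rw [hgy, hw₂eq (hΩsub hy.2)]
        simp only [hh_def]
        ring
      rw [he₁.fderiv_eq, he₂.fderiv_eq, fderiv_sub_const, fderiv_add_const,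
        hfu₁ x hx, hfu₂ x hx]
      ring
  -- integral identity
  have hJsum : J v₁ + J v₂ = J u₁ + J u₂ := by
    have h1 : ∀ᵐ x ∂μΩ, h x ≠ c' := by
      rw [ae_iff]
      convert hZ using 2
      ext y
      simp
    have h2 : ∀ᵐ x ∂μΩ, x ∈ Ω := ae_restrict_mem hΩmeas
    have hae_eq : ∀ᵐ x ∂μΩ,
        (1 - Real.sqrt (1 - ‖fderiv ℝ v₁ x‖ ^ 2)) + (1 - Real.sqrt (1 - ‖fderiv ℝ v₂ x‖ ^ 2)) =
        (1 - Real.sqrt (1 - ‖fderiv ℝ u₁ x‖ ^ 2)) + (1 - Real.sqrt (1 - ‖fderiv ℝ u₂ x‖ ^ 2)) := by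
      filter_upwards [h1, h2] with x hx1 hx2 using hclaimA x hx2 hx1
    have e1 : J v₁ + J v₂ = ∫ x in Ω,
        ((1 - Real.sqrt (1 - ‖fderiv ℝ v₁ x‖ ^ 2)) + (1 - Real.sqrt (1 - ‖fderiv ℝ v₂ x‖ ^ 2))) :=
      (integral_add (hJint v₁) (hJint v₂)).symm
    have e2 : J u₁ + J u₂ = ∫ x in Ω,
        ((1 - Real.sqrt (1 - ‖fderiv ℝ u₁ x‖ ^ 2)) + (1 - Real.sqrt (1 - ‖fderiv ℝ u₂ x‖ ^ 2))) :=
      (integral_add (hJint u₁) (hJint u₂)).symm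
    rw [e1, e2]
    exact integral_congr_ae hae_eq
  -- collapse the chain of inequalities
  have hρg : ρ₂ g ≤ ρ₁ g := hρ g (fun x _ => hg0 x)
  have hch1 : ρ₁ g ≤ J v₁ - J u₁ := by rw [hρ₁v₁] at hE1'; linarith
  have hch2 : J u₂ - J v₂ ≤ ρ₂ g := by rw [hρ₂v₂] at hE2'; linarith
  have hkey : ρ₂ g = J u₂ - J v₂ := by linarith
  -- midpoint inequality
  have hJm : (J u₂ + J v₂)/2 ≤ J m := by
    rw [hρ₂m] at hEm'
    linarith
  -- a.e. differentiability of extensions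
  have hdiffae : ∀ᵐ x : EuclideanSpace ℝ (Fin N) ∂volume,
      DifferentiableAt ℝ w₂ x ∧ DifferentiableAt ℝ g x := by
    filter_upwards [hw₂lip.ae_differentiableAt (μ := volume),
      hglip.ae_differentiableAt (μ := volume)] with x hx1 hx2 using ⟨hx1, hx2⟩
  -- the convexity defect
  set D : EuclideanSpace ℝ (Fin N) → ℝ := fun x =>
    ((1 - Real.sqrt (1 - ‖fderiv ℝ u₂ x‖ ^ 2)) + (1 - Real.sqrt (1 - ‖fderiv ℝ v₂ x‖ ^ 2)))/2 -
      (1 - Real.sqrt (1 - ‖fderiv ℝ m x‖ ^ 2)) with hD_def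
  have hevv₂ : ∀ x ∈ Ω, v₂ =ᶠ[nhds x] fun y => w₂ y - g y := by
    intro x hx
    refine hev v₂ _ x hx (fun y hy => ?_)
    show u₂ y - g y = w₂ y - g y
    rw [hw₂eq hy]
  have hDae : ∀ᵐ x ∂μΩ, (0 ≤ D x ∧ (D x ≤ 0 → fderiv ℝ u₂ x = fderiv ℝ v₂ x)) := by
    filter_upwards [ae_restrict_mem hΩmeas, ae_restrict_of_ae hdiffae] with x hxΩ hdx
    obtain ⟨hdw₂, hdg⟩ := hdx
    have hA : fderiv ℝ u₂ x = fderiv ℝ w₂ x := hfu₂ x hxΩ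
    have hB : fderiv ℝ v₂ x = fderiv ℝ w₂ x - fderiv ℝ g x := by
      rw [(hevv₂ x hxΩ).fderiv_eq, fderiv_fun_sub hdw₂ hdg]
    have hevm : m =ᶠ[nhds x] fun y => (2⁻¹:ℝ) • (w₂ y + (w₂ y - g y)) := by
      refine hev m _ x hxΩ (fun y hy => ?_)
      show u₂ y - g y / 2 = (2⁻¹:ℝ) • (w₂ y + (w₂ y - g y))
      rw [hw₂eq hy, smul_eq_mul]
      ring
    have hM : fderiv ℝ m x = (2⁻¹:ℝ) • (fderiv ℝ u₂ x + fderiv ℝ v₂ x) := by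
      rw [hA, hB, hevm.fderiv_eq, fderiv_fun_const_smul (f := fun y => w₂ y + (w₂ y - g y)) (hdw₂.add (hdw₂.sub hdg)),
        fderiv_fun_add (g := fun y => w₂ y - g y) hdw₂ (hdw₂.sub hdg), fderiv_fun_sub hdw₂ hdg]
    have hnA : ‖fderiv ℝ u₂ x‖ ≤ 1 := by
      have := norm_fderiv_le_of_lipschitzOn ℝ (hnbhd x hxΩ) h₂lip
      simpa using this
    have hnB : ‖fderiv ℝ v₂ x‖ ≤ 1 := by
      have := norm_fderiv_le_of_lipschitzOn ℝ (hnbhd x hxΩ) hv₂lip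
      simpa using this
    have hcvx := clm_avg_ge hnA hnB
    constructor
    · have h1 := hcvx.1
      simp only [hD_def, hM]
      linarith
    · intro hle
      refine hcvx.2 ?_
      simp only [hD_def, hM] at hle
      linarith
  have hDint : Integrable D μΩ := by
    have := ((((hJint u₂).add (hJint v₂)).div_const 2).sub (hJint m))
    exact this
  have hint12 : Integrable (fun x =>
      ((1 - Real.sqrt (1 - ‖fderiv ℝ u₂ x‖ ^ 2)) + (1 - Real.sqrt (1 - ‖fderiv ℝ v₂ x‖ ^ 2)))/2) μΩ :=
    ((hJint u₂).add (hJint v₂)).div_const 2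
  have hDsum : ∫ x, D x ∂μΩ = (J u₂ + J v₂)/2 - J m := by
    have e1 : ∫ x, D x ∂μΩ = (∫ x, (((1 - Real.sqrt (1 - ‖fderiv ℝ u₂ x‖ ^ 2)) +
        (1 - Real.sqrt (1 - ‖fderiv ℝ v₂ x‖ ^ 2)))/2) ∂μΩ) -
        ∫ x, (1 - Real.sqrt (1 - ‖fderiv ℝ m x‖ ^ 2)) ∂μΩ :=
      integral_sub hint12 (hJint m)
    have e2 : ∫ x, (((1 - Real.sqrt (1 - ‖fderiv ℝ u₂ x‖ ^ 2)) +
        (1 - Real.sqrt (1 - ‖fderiv ℝ v₂ x‖ ^ 2)))/2) ∂μΩ = (J u₂ + J v₂)/2 := by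
      rw [integral_div]
      congr 1
      exact integral_add (hJint u₂) (hJint v₂)
    rw [e1, e2]
  have hDnn : ∀ᵐ x ∂μΩ, 0 ≤ D x := by filter_upwards [hDae] with x hx using hx.1
  have hD0 : ∫ x, D x ∂μΩ = 0 := by
    refine le_antisymm ?_ (integral_nonneg_of_ae hDnn)
    rw [hDsum]
    linarith
  have hDz : D =ᵐ[μΩ] 0 := (integral_eq_zero_iff_of_nonneg_ae hDnn hDint).1 hD0
  have hfeq : ∀ᵐ x ∂μΩ, fderiv ℝ u₂ x = fderiv ℝ v₂ x := by
    filter_upwards [hDae, hDz] with x h1 h2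
    exact h1.2 (le_of_eq h2)
  have hgz_ae' : ∀ᵐ x ∂μΩ, fderiv ℝ g x = 0 := by
    filter_upwards [hfeq, ae_restrict_of_ae hdiffae, ae_restrict_mem hΩmeas] with x heq hdx hxΩ
    obtain ⟨hdw₂, hdg⟩ := hdx
    have hA : fderiv ℝ u₂ x = fderiv ℝ w₂ x := hfu₂ x hxΩ
    have hB : fderiv ℝ v₂ x = fderiv ℝ w₂ x - fderiv ℝ g x := by
      rw [(hevv₂ x hxΩ).fderiv_eq, fderiv_fun_sub hdw₂ hdg]
    rw [hA, hB] at heq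
    exact sub_eq_self.1 heq.symm
  have hgz_ae : ∀ᵐ x : EuclideanSpace ℝ (Fin N) ∂volume, x ∈ Ω → fderiv ℝ g x = 0 :=
    (ae_restrict_iff' hΩmeas).1 hgz_ae'
  -- local constancy of g on Ω
  have hloc : ∀ z ∈ Ω, ∃ r > 0, ball z r ⊆ Ω ∧ ∀ y ∈ ball z r, g y = g z := by
    intro z hz
    obtain ⟨R, hR0, hRsub⟩ := Metric.isOpen_iff.1 hΩopen z hz
    refine ⟨R/3, by linarith, ?_, ?_⟩
    · exact (ball_subset_ball (by linarith)).trans hRsub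
    · intro y hy
      refine eq_of_ae_fderiv_zero hglip hΩopen hgz_ae (by linarith) ?_ hy
      have h3 : (3:ℝ) * (R/3) = R := by ring
      rw [h3]
      exact hRsub
  -- connectedness: g is constant on Ω
  have hAopen : IsOpen {y | y ∈ Ω ∧ g y = g x₀} := by
    rw [Metric.isOpen_iff]
    rintro y ⟨hyΩ, hyv⟩
    obtain ⟨r, hr0, hrsub, hrconst⟩ := hloc y hyΩ
    exact ⟨r, hr0, fun w hw => ⟨hrsub hw, (hrconst w hw).trans hyv⟩⟩
  have hBopen : IsOpen {y | y ∈ Ω ∧ g y ≠ g x₀} := by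
    rw [Metric.isOpen_iff]
    rintro y ⟨hyΩ, hyv⟩
    obtain ⟨r, hr0, hrsub, hrconst⟩ := hloc y hyΩ
    exact ⟨r, hr0, fun w hw => ⟨hrsub hw, by rw [hrconst w hw]; exact hyv⟩⟩
  have hcover : Ω ⊆ {y | y ∈ Ω ∧ g y = g x₀} ∪ {y | y ∈ Ω ∧ g y ≠ g x₀} := by
    intro y hy
    by_cases hc : g y = g x₀
    · exact Or.inl ⟨hy, hc⟩
    · exact Or.inr ⟨hy, hc⟩
  have hdisj : Disjoint {y | y ∈ Ω ∧ g y = g x₀} {y | y ∈ Ω ∧ g y ≠ g x₀} := by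
    rw [Set.disjoint_left]
    rintro y ⟨_, h1⟩ ⟨_, h2⟩
    exact h2 h1
  have hΩA : Ω ⊆ {y | y ∈ Ω ∧ g y = g x₀} :=
    hΩconn.isPreconnected.subset_left_of_subset_union hAopen hBopen hdisj hcover
      ⟨x₀, hx₀, hx₀, rfl⟩
  -- propagate to the closure and reach a contradiction
  have hgconst : ∀ y ∈ closure Ω, g y = g x₀ := by
    have hsub2 : closure Ω ⊆ {y | g y = g x₀} :=
      closure_minimal (fun y hy => (hΩA hy).2) (isClosed_eq hgcont continuous_const)
    exact fun y hy => hsub2 hy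
  obtain ⟨y, hy⟩ := hfront
  have hgy1 : g y = 0 := hgz y hy
  have hgy2 : g y = g x₀ := hgconst y (hfsub hy)
  have hgx₀ : g x₀ = d - ε := by
    have hhx₀ : h x₀ = u₂ x₀ - u₁ x₀ := hhval x₀ (hΩsub hx₀)
    have e1 : h x₀ - c' = d - ε := by rw [hhx₀, hc'_def, hd_def]; ring
    show max (h x₀ - c') 0 = d - ε
    rw [e1]
    exact max_eq_left (by linarith)
  rw [hgy1, hgx₀] at hgy2
  linarith
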